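/- arXiv:1503.00751 — 2 statements merged into one kernel-verified Lean document; each statement's English description precedes it below -/
import Mathlib

section
/- If F ⊂ Γ(TΩ) × 𝔡_ν is a finite set satisfying D(Ω′) (resp. D_s(Ω′)), with F = {(X_1,d_1),…,(X_q,d_q)}, then the parameterization γ_t(x) = exp(t_1 X_1 + ⋯ + t_q X_q) x on R^q, with dilations e_j = d_j, is linearly finitely generated (resp. smoothly linearly finitely generated) by F on Ω′. -/
open MeasureTheory
open scoped BigOperators Classical

noncomputable section

/-- Points of `ℝ^m`. -/
abbrev Pt (m : ℕ) := Fin m → ℝ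

/-- Vector fields on `ℝ^n` (defined on all of `ℝ^n`; smoothness on the relevant open set
is imposed as a hypothesis where needed). -/
abbrev VF (n : ℕ) := Pt n → Pt n

/-- First-order partial derivative in the `j`-th coordinate direction. -/
noncomputable def pdv {m : ℕ} {E : Type*} [NormedAddCommGroup E] [NormedSpace ℝ E]
    (j : Fin m) (f : Pt m → E) : Pt m → E :=
  fun x => fderiv ℝ f x (Pi.single j 1)

/-- Iterated partial derivative `∂^α`. -/
noncomputable def md {m : ℕ} {E : Type*} [NormedAddCommGroup E] [NormedSpace ℝ E]
    (α : Fin m → ℕ) (f : Pt m → E) : Pt m → E :=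
  (List.finRange m).foldr (fun j g => (pdv j)^[α j] g) f

/-- `δ^d = ∏_μ δ_μ^{d_μ}` (real exponents). -/
noncomputable def dpow {ν : ℕ} (δ d : Fin ν → ℝ) : ℝ := ∏ μ, (δ μ) ^ (d μ)

/-- The unit cube `[0,1]^ν` of multi-parameter radii. -/
def unitCube (ν : ℕ) : Set (Fin ν → ℝ) := {δ | ∀ μ, 0 ≤ δ μ ∧ δ μ ≤ 1}

/-- `d ∈ 𝔡_ν`: the degree `d` is nonzero in precisely one component. -/
def InD {ν : ℕ} (d : Fin ν → ℝ) : Prop :=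
  ∃ μ, d μ ≠ 0 ∧ ∀ μ', μ' ≠ μ → d μ' = 0

/-- Lie bracket of vector fields. -/
noncomputable def vbracket {n : ℕ} (V W : VF n) : VF n :=
  fun x => fderiv ℝ W x (V x) - fderiv ℝ V x (W x)

/-- The unit-scale Carnot–Carathéodory ball of the finite family `Z` centred at `x₀`. -/
def CCBall {n q : ℕ} (Z : Fin q → VF n) (x₀ : Pt n) : Set (Pt n) :=
  {y | ∃ γ : ℝ → Pt n, ∃ a : Fin q → ℝ → ℝ,
    γ 0 = x₀ ∧ γ 1 = y ∧ (∀ t : ℝ, (∑ j, (a j t) ^ 2) < 1) ∧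
    IntervalIntegrable (fun s => ∑ j, a j s • Z j (γ s)) volume 0 1 ∧
    ∀ t ∈ Set.Icc (0 : ℝ) 1,
      γ t = x₀ + ∫ s in (0 : ℝ)..t, ∑ j, a j s • Z j (γ s)}

/-- The multi-parameter Carnot–Carathéodory ball `B_{(X,d)}(x₀,δ)`. -/
def MBall {n ν q : ℕ} (X : Fin q → VF n) (d : Fin q → Fin ν → ℝ)
    (x₀ : Pt n) (δ : Fin ν → ℝ) : Set (Pt n) :=
  CCBall (fun j x => dpow δ (d j) • X j x) x₀

/-- Derivative of a function along a vector field. -/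
noncomputable def vfD {n : ℕ} (V : VF n) (f : Pt n → ℝ) : Pt n → ℝ :=
  fun x => fderiv ℝ f x (V x)

/-- Iterated derivative along a list of vector fields. -/
noncomputable def listD {n : ℕ} (Vs : List (VF n)) (f : Pt n → ℝ) : Pt n → ℝ :=
  Vs.foldr vfD f

/-- `(X,d)` controls `(X₀,h)` on `Ω'`:  there is `τ > 0` so that for every `δ ∈ [0,1]^ν`
and `x ∈ Ω'` one can write `h(δ)·X₀ = Σ_j c_j δ^{d_j} X_j` on `B_{(X,d)}(x, τδ)` with all
iterated `(δX)`-derivatives of the coefficients uniformly bounded. -/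
def ControlsH {n ν q : ℕ} (X : Fin q → VF n) (d : Fin q → Fin ν → ℝ)
    (X₀ : VF n) (h : (Fin ν → ℝ) → ℝ) (Ω' : Set (Pt n)) : Prop :=
  ∃ τ : ℝ, 0 < τ ∧ ∃ c : (Fin ν → ℝ) → Pt n → Fin q → Pt n → ℝ,
    (∀ δ ∈ unitCube ν, ∀ x ∈ Ω',
      (∀ j, ContinuousOn (c δ x j) (MBall X d x (fun μ => τ * δ μ))) ∧
      ∀ y ∈ MBall X d x (fun μ => τ * δ μ),
        h δ • X₀ y = ∑ j, c δ x j y • (dpow δ (d j) • X j y)) ∧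
    (∀ m : ℕ, ∃ C : ℝ, ∀ δ ∈ unitCube ν, ∀ x ∈ Ω', ∀ j, ∀ L : List (Fin q),
      L.length ≤ m → ∀ y ∈ MBall X d x (fun μ => τ * δ μ),
        |listD (L.map (fun i z => dpow δ (d i) • X i z)) (c δ x j) y| ≤ C)

/-- `(X,d)` controls the pair `(X₀,d₀)` on `Ω'`. -/
def ControlsPair {n ν q : ℕ} (X : Fin q → VF n) (d : Fin q → Fin ν → ℝ)
    (p : VF n × (Fin ν → ℝ)) (Ω' : Set (Pt n)) : Prop :=
  ControlsH X d p.1 (fun δ => dpow δ p.2) Ω'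

/-- `(X,d)` smoothly controls `(X₀,h)` on `Ω'` (relative to the ambient open set `Ω`). -/
def SmoothControlsH {n ν q : ℕ} (X : Fin q → VF n) (d : Fin q → Fin ν → ℝ)
    (X₀ : VF n) (h : (Fin ν → ℝ) → ℝ) (Ω' Ω : Set (Pt n)) : Prop :=
  ∃ Ω'' : Set (Pt n), IsOpen Ω'' ∧ closure Ω' ⊆ Ω'' ∧ closure Ω'' ⊆ Ω ∧
    ∃ c : (Fin ν → ℝ) → Fin q → Pt n → ℝ,
      (∀ δ ∈ unitCube ν, ∀ j, ContDiffOn ℝ (⊤ : ℕ∞) (c δ j) Ω'') ∧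
      (∀ δ ∈ unitCube ν, ∀ y ∈ Ω'',
        h δ • X₀ y = ∑ j, c δ j y • (dpow δ (d j) • X j y)) ∧
      (∀ α : Fin n → ℕ, ∃ C : ℝ, ∀ δ ∈ unitCube ν, ∀ j, ∀ y ∈ Ω'',
        |md α (c δ j) y| ≤ C)

/-- `(X,d)` smoothly controls the pair `(X₀,d₀)` on `Ω'`. -/
def SmoothControlsPair {n ν q : ℕ} (X : Fin q → VF n) (d : Fin q → Fin ν → ℝ)
    (p : VF n × (Fin ν → ℝ)) (Ω' Ω : Set (Pt n)) : Prop :=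
  SmoothControlsH X d p.1 (fun δ => dpow δ p.2) Ω' Ω

/-- A (possibly infinite) set `S` controls a pair: some finite subfamily of `S` does. -/
def SetControlsPair {n ν : ℕ} (S : Set (VF n × (Fin ν → ℝ)))
    (p : VF n × (Fin ν → ℝ)) (Ω' : Set (Pt n)) : Prop :=
  ∃ q : ℕ, ∃ X : Fin q → VF n, ∃ d : Fin q → Fin ν → ℝ,
    (∀ j, (X j, d j) ∈ S) ∧ ControlsPair X d p Ω'

def SetSmoothControlsPair {n ν : ℕ} (S : Set (VF n × (Fin ν → ℝ)))
    (p : VF n × (Fin ν → ℝ)) (Ω' Ω : Set (Pt n)) : Prop :=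
  ∃ q : ℕ, ∃ X : Fin q → VF n, ∃ d : Fin q → Fin ν → ℝ,
    (∀ j, (X j, d j) ∈ S) ∧ SmoothControlsPair X d p Ω' Ω

def SetControlsSet {n ν : ℕ} (S T : Set (VF n × (Fin ν → ℝ)))
    (Ω' : Set (Pt n)) : Prop :=
  ∀ p ∈ T, SetControlsPair S p Ω'

def SetSmoothControlsSet {n ν : ℕ} (S T : Set (VF n × (Fin ν → ℝ)))
    (Ω' Ω : Set (Pt n)) : Prop :=
  ∀ p ∈ T, SetSmoothControlsPair S p Ω' Ω

/-- `S` and `T` are equivalent on `Ω'`: each controls the other. -/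
def EquivSets {n ν : ℕ} (S T : Set (VF n × (Fin ν → ℝ))) (Ω' : Set (Pt n)) : Prop :=
  SetControlsSet S T Ω' ∧ SetControlsSet T S Ω'

def EquivSetsS {n ν : ℕ} (S T : Set (VF n × (Fin ν → ℝ))) (Ω' Ω : Set (Pt n)) : Prop :=
  SetSmoothControlsSet S T Ω' Ω ∧ SetSmoothControlsSet T S Ω' Ω

/-- The Lie-bracket generated set `L(S)` as an inductive predicate. -/
inductive genLie {n ν : ℕ} (S : Set (VF n × (Fin ν → ℝ))) :
    VF n × (Fin ν → ℝ) → Prop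
  | base (p : VF n × (Fin ν → ℝ)) : p ∈ S → genLie S p
  | br (p q : VF n × (Fin ν → ℝ)) : genLie S p → genLie S q →
      genLie S (vbracket p.1 q.1, p.2 + q.2)

/-- `L(S)`: the smallest set containing `S` closed under `([X₁,X₂], d₁+d₂)`. -/
def LSet {n ν : ℕ} (S : Set (VF n × (Fin ν → ℝ))) : Set (VF n × (Fin ν → ℝ)) :=
  {p | genLie S p}

/-- Membership in the Lie algebra generated by a set of vector fields. -/
inductive lieGen {n : ℕ} (V : Set (VF n)) : VF n → Prop
  | base (X : VF n) : X ∈ V → lieGen V X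
  | br (X Y : VF n) : lieGen V X → lieGen V Y → lieGen V (vbracket X Y)

/-- Hörmander's condition for `V` on `U`: the Lie algebra generated by `V` spans the
tangent space at every point of `U`. -/
def Hormander {n : ℕ} (V : Set (VF n)) (U : Set (Pt n)) : Prop :=
  ∀ x ∈ U, Submodule.span ℝ {v : Pt n | ∃ X, lieGen V X ∧ v = X x} = ⊤

/-- Brackets of depth at most `m` (so `LD S m` corresponds to the paper's `L_{m+1}(S)`). -/
inductive genLieD {n ν : ℕ} (S : Set (VF n × (Fin ν → ℝ))) :
    ℕ → VF n × (Fin ν → ℝ) → Prop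
  | base (p : VF n × (Fin ν → ℝ)) : p ∈ S → genLieD S 0 p
  | mono (m : ℕ) (p : VF n × (Fin ν → ℝ)) : genLieD S m p → genLieD S (m + 1) p
  | br (k l : ℕ) (p q : VF n × (Fin ν → ℝ)) : genLieD S k p → genLieD S l q →
      genLieD S (k + l + 1) (vbracket p.1 q.1, p.2 + q.2)

def LD {n ν : ℕ} (S : Set (VF n × (Fin ν → ℝ))) (m : ℕ) :
    Set (VF n × (Fin ν → ℝ)) :=
  {p | genLieD S m p}

/-- `π_μ S`: the elements of `S` whose degree is nonzero only in the `μ`-th component. -/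
def piMu {n ν : ℕ} (μ : Fin ν) (S : Set (VF n × (Fin ν → ℝ))) :
    Set (VF n × (Fin ν → ℝ)) :=
  {p ∈ S | ∀ μ', μ' ≠ μ → p.2 μ' = 0}

/-- `σ_K S`: the elements of `S` of degree `|d|₁ ≤ K`. -/
def sigmaK {n ν : ℕ} (K : ℝ) (S : Set (VF n × (Fin ν → ℝ))) :
    Set (VF n × (Fin ν → ℝ)) :=
  {p ∈ S | (∑ μ, |p.2 μ|) ≤ K}

/-- The multi-parameter dilation `δ t` on `ℝ^N` with exponents `e`. -/
noncomputable def dilVec {N ν : ℕ} (e : Fin N → Fin ν → ℝ) (δ : Fin ν → ℝ)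
    (t : Pt N) : Pt N :=
  fun k => dpow δ (e k) * t k

/-- `(X,d)` controls the vector field parameterization `(W,e,N)` on `Ω'`. -/
def ControlsParamH {n ν q N : ℕ} (X : Fin q → VF n) (d : Fin q → Fin ν → ℝ)
    (W : Pt N → VF n) (e : Fin N → Fin ν → ℝ) (Ω' : Set (Pt n)) : Prop :=
  ∃ τ : ℝ, 0 < τ ∧ ∃ ρ₁ : ℝ, 0 < ρ₁ ∧
    ∃ c : (Fin ν → ℝ) → Pt n → Fin q → Pt N → Pt n → ℝ,
      (∀ δ ∈ unitCube ν, ∀ x₀ ∈ Ω', ∀ t : Pt N, ‖t‖ < ρ₁ →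
        ∀ x ∈ MBall X d x₀ (fun μ => τ * δ μ),
          W (dilVec e δ t) x = ∑ j, c δ x₀ j t x • (dpow δ (d j) • X j x)) ∧
      (∀ m : ℕ, ∃ C : ℝ, ∀ δ ∈ unitCube ν, ∀ x₀ ∈ Ω', ∀ j, ∀ L : List (Fin q),
        ∀ β : Fin N → ℕ, L.length + (∑ k, β k) ≤ m → ∀ t : Pt N, ‖t‖ < ρ₁ →
          ∀ x ∈ MBall X d x₀ (fun μ => τ * δ μ),
            |listD (L.map (fun i z => dpow δ (d i) • X i z))
              (fun z => md β (fun t' => c δ x₀ j t' z) t) x| ≤ C)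

/-- `(X,d)` smoothly controls the vector field parameterization `(W,e,N)` on `Ω'`. -/
def SmoothControlsParamH {n ν q N : ℕ} (X : Fin q → VF n) (d : Fin q → Fin ν → ℝ)
    (W : Pt N → VF n) (e : Fin N → Fin ν → ℝ) (Ω' Ω : Set (Pt n)) : Prop :=
  ∃ Ω'' : Set (Pt n), IsOpen Ω'' ∧ closure Ω' ⊆ Ω'' ∧ closure Ω'' ⊆ Ω ∧
  ∃ ρ₁ : ℝ, 0 < ρ₁ ∧
  ∃ c : (Fin ν → ℝ) → Fin q → Pt N → Pt n → ℝ,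
    (∀ δ ∈ unitCube ν, ∀ j, ContDiffOn ℝ (⊤ : ℕ∞)
      (fun p : Pt N × Pt n => c δ j p.1 p.2) (Metric.ball 0 ρ₁ ×ˢ Ω'')) ∧
    (∀ δ ∈ unitCube ν, ∀ t : Pt N, ‖t‖ < ρ₁ → ∀ y ∈ Ω'',
      W (dilVec e δ t) y = ∑ j, c δ j t y • (dpow δ (d j) • X j y)) ∧
    (∀ α : Fin n → ℕ, ∀ β : Fin N → ℕ, ∃ C : ℝ, ∀ δ ∈ unitCube ν, ∀ j,
      ∀ t : Pt N, ‖t‖ < ρ₁ → ∀ y ∈ Ω'',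
        |md α (fun z => md β (fun t' => c δ j t' z) t) y| ≤ C)

def SetControlsParam {n ν N : ℕ} (S : Set (VF n × (Fin ν → ℝ)))
    (W : Pt N → VF n) (e : Fin N → Fin ν → ℝ) (Ω' : Set (Pt n)) : Prop :=
  ∃ q : ℕ, ∃ X : Fin q → VF n, ∃ d : Fin q → Fin ν → ℝ,
    (∀ j, (X j, d j) ∈ S) ∧ ControlsParamH X d W e Ω'

def SetSmoothControlsParam {n ν N : ℕ} (S : Set (VF n × (Fin ν → ℝ)))
    (W : Pt N → VF n) (e : Fin N → Fin ν → ℝ) (Ω' Ω : Set (Pt n)) : Prop :=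
  ∃ q : ℕ, ∃ X : Fin q → VF n, ∃ d : Fin q → Fin ν → ℝ,
    (∀ j, (X j, d j) ∈ S) ∧ SmoothControlsParamH X d W e Ω' Ω

/-- `α! = ∏ (α_k)!`. -/
def mfact {N : ℕ} (α : Fin N → ℕ) : ℝ := ∏ k, (Nat.factorial (α k) : ℝ)

/-- The Taylor coefficient `X_α` of `W(t) ~ Σ_{|α|>0} t^α X_α`. -/
noncomputable def taylorC {n N : ℕ} (W : Pt N → VF n) (α : Fin N → ℕ) : VF n :=
  fun x => (mfact α)⁻¹ • md α (fun t => W t x) 0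

/-- `deg(α) = Σ_k α_k e_k`. -/
def degA {N ν : ℕ} (e : Fin N → Fin ν → ℝ) (α : Fin N → ℕ) : Fin ν → ℝ :=
  fun μ => ∑ k, (α k : ℝ) * e k μ

/-- The set `𝒮 = {(X_α, deg α) : deg α ∈ 𝔡_ν}` of a vector field parameterization. -/
def TaylorS {n N ν : ℕ} (W : Pt N → VF n) (e : Fin N → Fin ν → ℝ) :
    Set (VF n × (Fin ν → ℝ)) :=
  {p | ∃ α : Fin N → ℕ, α ≠ 0 ∧ InD (degA e α) ∧ p = (taylorC W α, degA e α)}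

/-- The set `𝒱 = {(X_α, deg α) : |α| > 0}` of a vector field parameterization. -/
def TaylorV {n N ν : ℕ} (W : Pt N → VF n) (e : Fin N → Fin ν → ℝ) :
    Set (VF n × (Fin ν → ℝ)) :=
  {p | ∃ α : Fin N → ℕ, α ≠ 0 ∧ p = (taylorC W α, degA e α)}

/-- `𝓕₀ = {(X_α, deg α) : deg α ∈ 𝔡_ν, |α| = 1}`: the first-order Taylor coefficients. -/
def TaylorF0 {n N ν : ℕ} (W : Pt N → VF n) (e : Fin N → Fin ν → ℝ) :
    Set (VF n × (Fin ν → ℝ)) :=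
  {p | ∃ α : Fin N → ℕ, (∑ k, α k) = 1 ∧ InD (degA e α) ∧
    p = (taylorC W α, degA e α)}

/-- `T` is finitely generated by `F` on `Ω'`. -/
def SetFinGenBy {n ν : ℕ} (T F : Set (VF n × (Fin ν → ℝ))) (Ω' : Set (Pt n)) : Prop :=
  F.Finite ∧ EquivSets F T Ω'

def SetFinGen {n ν : ℕ} (T : Set (VF n × (Fin ν → ℝ))) (Ω' : Set (Pt n)) : Prop :=
  ∃ F, SetFinGenBy T F Ω'

def SetSmoothFinGenBy {n ν : ℕ} (T F : Set (VF n × (Fin ν → ℝ)))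
    (Ω' Ω : Set (Pt n)) : Prop :=
  F.Finite ∧ EquivSetsS F T Ω' Ω

def SetSmoothFinGen {n ν : ℕ} (T : Set (VF n × (Fin ν → ℝ)))
    (Ω' Ω : Set (Pt n)) : Prop :=
  ∃ F, SetSmoothFinGenBy T F Ω' Ω

def SetLinFinGen {n ν : ℕ} (T : Set (VF n × (Fin ν → ℝ))) (Ω' : Set (Pt n)) : Prop :=
  ∃ F, (∀ p ∈ F, InD p.2) ∧ SetFinGenBy T F Ω'

def SetSmoothLinFinGen {n ν : ℕ} (T : Set (VF n × (Fin ν → ℝ)))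
    (Ω' Ω : Set (Pt n)) : Prop :=
  ∃ F, (∀ p ∈ F, InD p.2) ∧ SetSmoothFinGenBy T F Ω' Ω

/-- `(W,e,N)` is finitely generated by `F` on `Ω'`. -/
def ParamFinGenBy {n ν N : ℕ} (W : Pt N → VF n) (e : Fin N → Fin ν → ℝ)
    (F : Set (VF n × (Fin ν → ℝ))) (Ω' : Set (Pt n)) : Prop :=
  SetControlsParam (LSet (TaylorS W e)) W e Ω' ∧ SetFinGenBy (LSet (TaylorS W e)) F Ω'

def ParamFinGen {n ν N : ℕ} (W : Pt N → VF n) (e : Fin N → Fin ν → ℝ)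
    (Ω' : Set (Pt n)) : Prop :=
  SetControlsParam (LSet (TaylorS W e)) W e Ω' ∧ SetFinGen (LSet (TaylorS W e)) Ω'

def ParamSmoothFinGenBy {n ν N : ℕ} (W : Pt N → VF n) (e : Fin N → Fin ν → ℝ)
    (F : Set (VF n × (Fin ν → ℝ))) (Ω' Ω : Set (Pt n)) : Prop :=
  SetSmoothControlsParam (LSet (TaylorS W e)) W e Ω' Ω ∧
    SetSmoothFinGenBy (LSet (TaylorS W e)) F Ω' Ω

def ParamSmoothFinGen {n ν N : ℕ} (W : Pt N → VF n) (e : Fin N → Fin ν → ℝ)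
    (Ω' Ω : Set (Pt n)) : Prop :=
  SetSmoothControlsParam (LSet (TaylorS W e)) W e Ω' Ω ∧
    SetSmoothFinGen (LSet (TaylorS W e)) Ω' Ω

/-- `F` satisfies `𝒟(Ω')`: it controls all brackets of its own elements. -/
def DCondSet {n ν : ℕ} (F : Set (VF n × (Fin ν → ℝ))) (Ω' : Set (Pt n)) : Prop :=
  ∀ p ∈ F, ∀ p' ∈ F, SetControlsPair F (vbracket p.1 p'.1, p.2 + p'.2) Ω'

/-- `F` satisfies `𝒟_s(Ω')`: it smoothly controls all brackets of its own elements. -/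
def DsCondSet {n ν : ℕ} (F : Set (VF n × (Fin ν → ℝ))) (Ω' Ω : Set (Pt n)) : Prop :=
  ∀ p ∈ F, ∀ p' ∈ F, SetSmoothControlsPair F (vbracket p.1 p'.1, p.2 + p'.2) Ω' Ω

/-- `(W,e,N)` is linearly finitely generated by `F` on `Ω'`. -/
def ParamLinFinGenBy {n ν N : ℕ} (W : Pt N → VF n) (e : Fin N → Fin ν → ℝ)
    (F : Set (VF n × (Fin ν → ℝ))) (Ω' : Set (Pt n)) : Prop :=
  DCondSet (TaylorF0 W e) Ω' ∧ SetControlsParam (TaylorF0 W e) W e Ω' ∧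
    EquivSets (TaylorF0 W e) F Ω'

/-- `(W,e,N)` is smoothly linearly finitely generated by `F` on `Ω'`. -/
def ParamSmoothLinFinGenBy {n ν N : ℕ} (W : Pt N → VF n) (e : Fin N → Fin ν → ℝ)
    (F : Set (VF n × (Fin ν → ℝ))) (Ω' Ω : Set (Pt n)) : Prop :=
  DsCondSet (TaylorF0 W e) Ω' Ω ∧ SetSmoothControlsParam (TaylorF0 W e) W e Ω' Ω ∧
    EquivSetsS (TaylorF0 W e) F Ω' Ω


section Helpers

/-- `pdv` of a constant function is zero. -/
lemma pdv_const' {m : ℕ} (j : Fin m) (c : ℝ) :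
    pdv j (fun _ : Pt m => c) = fun _ => 0 := by
  funext x; simp [pdv]

lemma pdv_iter_zero {m : ℕ} (j : Fin m) (k : ℕ) :
    (pdv j)^[k] (fun _ : Pt m => (0:ℝ)) = fun _ => 0 := by
  induction k with
  | zero => rfl
  | succ k ih => rw [Function.iterate_succ_apply, pdv_const', ih]

lemma pdv_iter_const {m : ℕ} (j : Fin m) (k : ℕ) (c : ℝ) :
    (pdv j)^[k] (fun _ : Pt m => c) = (fun _ => c) ∨
      (pdv j)^[k] (fun _ : Pt m => c) = fun _ => 0 := by
  cases k with
  | zero => left; rfl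
  | succ k => right; rw [Function.iterate_succ_apply, pdv_const', pdv_iter_zero]

lemma foldr_const_cases {m : ℕ} (α : Fin m → ℕ) (c : ℝ) (l : List (Fin m)) :
    l.foldr (fun j g => (pdv j)^[α j] g) (fun _ : Pt m => c) = (fun _ => c) ∨
      l.foldr (fun j g => (pdv j)^[α j] g) (fun _ : Pt m => c) = fun _ => 0 := by
  induction l with
  | nil => left; rfl
  | cons a l ih =>
    rcases ih with h | h <;> rw [List.foldr_cons, h]
    · exact pdv_iter_const a (α a) c
    · rcases pdv_iter_const a (α a) 0 with h' | h' <;> right <;> exact h'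

lemma md_const_bound {m : ℕ} (α : Fin m → ℕ) (c : ℝ) (y : Pt m) :
    |md α (fun _ : Pt m => c) y| ≤ |c| := by
  rcases foldr_const_cases α c (List.finRange m) with h | h <;>
    simp only [md, h] <;> simp

/-- `pdv` of a coordinate projection. -/
lemma pdv_proj {m : ℕ} (j j₀ : Fin m) :
    pdv j (fun t : Pt m => t j₀) = fun _ => (Pi.single j 1 : Pt m) j₀ := by
  funext x
  have : fderiv ℝ (fun t : Pt m => t j₀) x
      = (ContinuousLinearMap.proj j₀ : Pt m →L[ℝ] ℝ) :=
    (ContinuousLinearMap.proj j₀ : Pt m →L[ℝ] ℝ).fderiv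
  simp [pdv, this]

lemma pdv_iter_proj {m : ℕ} (j j₀ : Fin m) (k : ℕ) :
    (pdv j)^[k] (fun t : Pt m => t j₀) = (fun t => t j₀) ∨
      ∃ c : ℝ, |c| ≤ 1 ∧ (pdv j)^[k] (fun t : Pt m => t j₀) = fun _ => c := by
  cases k with
  | zero => left; rfl
  | succ k =>
    right
    rw [Function.iterate_succ_apply, pdv_proj]
    rcases pdv_iter_const j k ((Pi.single j 1 : Pt m) j₀) with h | h
    · refine ⟨(Pi.single j 1 : Pt m) j₀, ?_, h⟩
      rcases eq_or_ne j₀ j with rfl | hne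
      · simp
      · simp [Pi.single_eq_of_ne hne]
    · exact ⟨0, by simp, h⟩

lemma foldr_proj_cases {m : ℕ} (β : Fin m → ℕ) (j₀ : Fin m) (l : List (Fin m)) :
    l.foldr (fun j g => (pdv j)^[β j] g) (fun t : Pt m => t j₀) = (fun t => t j₀) ∨
      ∃ c : ℝ, |c| ≤ 1 ∧
        l.foldr (fun j g => (pdv j)^[β j] g) (fun t : Pt m => t j₀) = fun _ => c := by
  induction l with
  | nil => left; rfl
  | cons a l ih =>
    rw [List.foldr_cons]
    rcases ih with h | ⟨c, hc, h⟩ <;> rw [h]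
    · exact pdv_iter_proj a j₀ (β a)
    · right
      rcases pdv_iter_const a (β a) c with h' | h'
      · exact ⟨c, hc, h'⟩
      · exact ⟨0, by simp, h'⟩

lemma md_proj_bound {m : ℕ} (β : Fin m → ℕ) (j₀ : Fin m) (t : Pt m) :
    |md β (fun t' : Pt m => t' j₀) t| ≤ max ‖t‖ 1 := by
  rcases foldr_proj_cases β j₀ (List.finRange m) with h | ⟨c, hc, h⟩ <;>
      simp only [md, h]
  · refine le_trans ?_ (le_max_left _ _)
    exact (Real.norm_eq_abs _ ▸ norm_le_pi_norm t j₀)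
  · exact le_trans hc (le_max_right _ _)

lemma vfD_const {n : ℕ} (V : VF n) (c : ℝ) :
    vfD V (fun _ => c) = fun _ => 0 := by
  funext x; simp [vfD]

lemma listD_const_cases {n : ℕ} (L : List (VF n)) (c : ℝ) :
    listD L (fun _ => c) = (fun _ => c) ∨ listD L (fun _ => c) = fun _ => 0 := by
  induction L with
  | nil => left; rfl
  | cons V L ih =>
    right
    show vfD V (listD L fun _ => c) = fun _ => 0
    rcases ih with h | h <;> rw [h]
    · exact vfD_const V c
    · exact vfD_const V 0

lemma listD_const_bound {n : ℕ} (L : List (VF n)) (c : ℝ) (x : Pt n) :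
    |listD L (fun _ => c) x| ≤ |c| := by
  rcases listD_const_cases L c with h | h <;> rw [h] <;> simp

lemma foldr_zero {m : ℕ} {E : Type*} [NormedAddCommGroup E] [NormedSpace ℝ E]
    (α : Fin m → ℕ) (f : Pt m → E) :
    ∀ l : List (Fin m), (∀ j ∈ l, α j = 0) →
      l.foldr (fun j g => (pdv j)^[α j] g) f = f := by
  intro l
  induction l with
  | nil => intro _; rfl
  | cons a l ih =>
    intro h0
    rw [List.foldr_cons, ih (fun j hj => h0 j (List.mem_cons_of_mem a hj)),
      h0 a List.mem_cons_self]
    rfl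

/-- foldr for a multi-index supported at one coordinate with value 1. -/
lemma foldr_single_step {m : ℕ} {E : Type*} [NormedAddCommGroup E] [NormedSpace ℝ E]
    (k : Fin m) (f : Pt m → E) :
    ∀ l : List (Fin m), l.Nodup →
      l.foldr (fun j g => (pdv j)^[(Pi.single k 1 : Fin m → ℕ) j] g) f =
        if k ∈ l then pdv k f else f := by
  intro l hl
  induction l with
  | nil => simp
  | cons a l ih =>
    rw [List.nodup_cons] at hl
    rcases eq_or_ne a k with rfl | hne
    · rw [List.foldr_cons,
        foldr_zero _ f l (fun j hj => Pi.single_eq_of_ne (fun h => hl.1 (by rw [← h]; exact hj)) 1)]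
      simp
    · rw [List.foldr_cons, Pi.single_eq_of_ne hne, ih hl.2]
      have hmem : (k ∈ a :: l) ↔ (k ∈ l) := by
        simp [List.mem_cons, Ne.symm hne]
      by_cases hk : k ∈ l <;> simp [hk, hmem]

lemma md_single {m : ℕ} {E : Type*} [NormedAddCommGroup E] [NormedSpace ℝ E]
    (k : Fin m) (f : Pt m → E) :
    md (Pi.single k 1) f = pdv k f := by
  rw [md, foldr_single_step k f (List.finRange m) (List.nodup_finRange m)]
  simp [List.mem_finRange]

lemma mfact_single {N : ℕ} (k : Fin N) : mfact (Pi.single k 1) = 1 := by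
  simp [mfact, Pi.single_apply, apply_ite Nat.factorial]

lemma degA_single {N ν : ℕ} (e : Fin N → Fin ν → ℝ) (k : Fin N) :
    degA e (Pi.single k 1) = e k := by
  funext μ
  simp [degA, Pi.single_apply, ite_mul]

lemma taylorC_linear {n q : ℕ} (Y : Fin q → VF n) (k : Fin q) :
    taylorC (fun t x => ∑ j, t j • Y j x) (Pi.single k 1) = Y k := by
  funext x
  have hL : (fun t : Pt q => ∑ j, t j • Y j x) =
      ⇑(∑ j, (ContinuousLinearMap.proj j : Pt q →L[ℝ] ℝ).smulRight (Y j x)) := by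
    funext t
    simp [ContinuousLinearMap.sum_apply]
  simp only [taylorC, mfact_single, inv_one, one_smul, md_single, pdv]
  rw [hL, ContinuousLinearMap.fderiv]
  simp [ContinuousLinearMap.sum_apply, Pi.single_apply, ite_smul]

lemma exists_single_of_sum_eq_one {q : ℕ} (α : Fin q → ℕ) (h : (∑ k, α k) = 1) :
    ∃ k, α = Pi.single k 1 := by
  have hne : ∃ k, α k ≠ 0 := by
    by_contra hc
    push_neg at hc
    simp [hc] at h
  obtain ⟨k, hk⟩ := hne
  have hsplit : α k + ∑ j ∈ Finset.univ.erase k, α j = 1 := by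
    rw [Finset.add_sum_erase _ _ (Finset.mem_univ k)]; exact h
  have hk1 : α k = 1 := by omega
  have hz : ∑ j ∈ Finset.univ.erase k, α j = 0 := by omega
  rw [Finset.sum_eq_zero_iff] at hz
  refine ⟨k, funext fun j => ?_⟩
  rcases eq_or_ne j k with rfl | hne'
  · simp [hk1]
  · rw [Pi.single_eq_of_ne hne']
    exact hz j (Finset.mem_erase.2 ⟨hne', Finset.mem_univ j⟩)

lemma taylorF0_eq {n ν q : ℕ} (Y : Fin q → VF n) (dY : Fin q → Fin ν → ℝ)
    (hd : ∀ j, InD (dY j)) :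
    TaylorF0 (fun t x => ∑ j, t j • Y j x) dY = Set.range fun j => (Y j, dY j) := by
  ext p
  constructor
  · rintro ⟨α, hsum, _, rfl⟩
    obtain ⟨k, rfl⟩ := exists_single_of_sum_eq_one α hsum
    exact ⟨k, by rw [taylorC_linear, degA_single]⟩
  · rintro ⟨k, rfl⟩
    refine ⟨Pi.single k 1, by simp [Pi.single_apply], ?_, ?_⟩
    · rw [degA_single]; exact hd k
    · rw [taylorC_linear, degA_single]

end Helpers

/-- If `F = {(X₁,d₁),…,(X_q,d_q)} ⊂ Γ(TΩ) × 𝔡_ν` satisfies `𝒟(Ω')`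
(resp. `𝒟_s(Ω')`), then the parameterization `γ_t(x) = exp(t₁X₁+⋯+t_qX_q)x` on `ℝ^q`
with dilations `e_j = d_j` — whose corresponding vector field parameterization is
`W(t,x) = Σ_j t_j X_j(x)`, encoded by `hW` — is linearly finitely generated
(resp. smoothly linearly finitely generated) by `F` on `Ω'`. -/
theorem stmt13 {n ν q : ℕ} (Ω Ω' : Set (Pt n)) (hΩ : IsOpen Ω) (hΩ' : IsOpen Ω')
    (hcl : closure Ω' ⊆ Ω) (hcpt : IsCompact (closure Ω'))
    (Y : Fin q → VF n) (dY : Fin q → Fin ν → ℝ)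
    (hreg : ∀ j, ContDiffOn ℝ (⊤ : ℕ∞) (Y j) Ω)
    (hd : ∀ j, (∀ μ, 0 ≤ dY j μ) ∧ InD (dY j))
    (ρ : ℝ) (hρ : 0 < ρ)
    (γ : Pt q → Pt n → Pt n) (hγ0 : ∀ x, γ 0 x = x)
    (hW : ∀ t : Pt q, ∀ x : Pt n, ‖t‖ < ρ → x ∈ Ω →
      HasDerivAt (fun ε : ℝ => γ (ε • t) x) (∑ j, t j • Y j (γ t x)) 1) :
    (DCondSet (Set.range fun j => (Y j, dY j)) Ω' →
      ParamLinFinGenBy (fun t x => ∑ j, t j • Y j x) dY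
        (Set.range fun j => (Y j, dY j)) Ω') ∧
    (DsCondSet (Set.range fun j => (Y j, dY j)) Ω' Ω →
      ParamSmoothLinFinGenBy (fun t x => ∑ j, t j • Y j x) dY
        (Set.range fun j => (Y j, dY j)) Ω' Ω) := by
  have hF0 : TaylorF0 (fun t x => ∑ j, t j • Y j x) dY = Set.range fun j => (Y j, dY j) :=
    taylorF0_eq Y dY (fun j => (hd j).2)
  have hpair : ∀ j₀ : Fin q, ControlsPair Y dY (Y j₀, dY j₀) Ω' := by
    intro j₀
    refine ⟨1, one_pos, fun δ x j y => if j = j₀ then 1 else 0, ?_, ?_⟩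
    · intro δ _ x _
      refine ⟨fun j => continuousOn_const, fun y _ => ?_⟩
      simp [ite_smul]
    · intro m
      refine ⟨1, fun δ _ x _ j L _ y _ => ?_⟩
      refine le_trans (listD_const_bound _ _ _) ?_
      split <;> simp
  have hctrlset : SetControlsSet (Set.range fun j => (Y j, dY j))
      (Set.range fun j => (Y j, dY j)) Ω' := by
    rintro p ⟨j₀, rfl⟩
    exact ⟨q, Y, dY, fun j => ⟨j, rfl⟩, hpair j₀⟩
  have hparam : ControlsParamH Y dY (fun t x => ∑ j, t j • Y j x) dY Ω' := by
    refine ⟨1, one_pos, 1, one_pos, fun δ x₀ j t x => t j, ?_, ?_⟩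
    · intro δ _ x₀ _ t _ x _
      simp [dilVec, smul_smul, mul_comm]
    · intro m
      refine ⟨1, fun δ _ x₀ _ j L β _ t ht x _ => ?_⟩
      refine le_trans (listD_const_bound _ _ _) ?_
      exact le_trans (md_proj_bound β j t) (max_eq_right ht.le).le
  obtain ⟨Ω'', hO, hsub1, hsub2⟩ :=
    normal_exists_closure_subset isClosed_closure hΩ hcl
  have hspair : ∀ j₀ : Fin q, SmoothControlsPair Y dY (Y j₀, dY j₀) Ω' Ω := by
    intro j₀
    refine ⟨Ω'', hO, hsub1, hsub2, fun δ j y => if j = j₀ then 1 else 0,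
      fun δ _ j => contDiffOn_const, fun δ _ y _ => ?_, fun α => ⟨1, ?_⟩⟩
    · simp [ite_smul]
    · intro δ _ j y _
      refine le_trans (md_const_bound α _ y) ?_
      split <;> simp
  have hsctrl : SetSmoothControlsSet (Set.range fun j => (Y j, dY j))
      (Set.range fun j => (Y j, dY j)) Ω' Ω := by
    rintro p ⟨j₀, rfl⟩
    exact ⟨q, Y, dY, fun j => ⟨j, rfl⟩, hspair j₀⟩
  have hsparam : SmoothControlsParamH Y dY (fun t x => ∑ j, t j • Y j x) dY Ω' Ω := by
    refine ⟨Ω'', hO, hsub1, hsub2, 1, one_pos, fun δ j t x => t j, ?_, ?_, ?_⟩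
    · intro δ _ j
      exact ((contDiff_pi.1 (contDiff_fst (𝕜 := ℝ) (E := Pt q) (F := Pt n)) j)).contDiffOn
    · intro δ _ t _ y _
      simp [dilVec, smul_smul, mul_comm]
    · intro α β
      refine ⟨1, fun δ _ j t ht y _ => ?_⟩
      refine le_trans (md_const_bound α _ y) ?_
      exact le_trans (md_proj_bound β j t) (max_eq_right ht.le).le
  constructor
  · intro hD
    unfold ParamLinFinGenBy
    rw [hF0]
    exact ⟨hD, ⟨q, Y, dY, fun j => ⟨j, rfl⟩, hparam⟩, hctrlset, hctrlset⟩
  · intro hD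
    unfold ParamSmoothLinFinGenBy
    rw [hF0]
    exact ⟨hD, ⟨q, Y, dY, fun j => ⟨j, rfl⟩, hsparam⟩, hsctrl, hsctrl⟩


end
end

section
/- If S̃ ⊂ Γ(TΩ) × 𝔡_{ν̃} is such that L(S̃) is smoothly finitely generated (resp. smoothly linearly finitely generated) on Ω′, then the augmented set S = {(∂/∂x_1, (1, 0_{ν̃})), …, (∂/∂x_n, (1, 0_{ν̃}))} ∪ {(X̃, (0, d̃)) : (X̃, d̃) ∈ S̃}, consisting of the Euclidean coordinate fields with degree (1, 0_{ν̃}) together with the original fields, has L(S) smoothly finitely generated (resp. smoothly linearly finitely generated) on Ω′ (with ν = 1 + ν̃ parameters). -/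
open MeasureTheory
open scoped BigOperators Classical

noncomputable section

section Helpers

variable {m : ℕ}

lemma pdv_constFn (j : Fin m) (c : ℝ) : pdv j (fun _ : Pt m => c) = fun _ => (0:ℝ) := by
  funext x; simp [pdv]

lemma myfderiv_const_mul (k : ℝ) (f : Pt m → ℝ) (x : Pt m) :
    fderiv ℝ (fun y => k * f y) x = k • fderiv ℝ f x := by
  rcases eq_or_ne k 0 with rfl | hk
  · simp
  · by_cases hf : DifferentiableAt ℝ f x
    · exact fderiv_const_mul hf k
    · rw [fderiv_zero_of_not_differentiableAt hf,
        fderiv_zero_of_not_differentiableAt, smul_zero]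
      intro h
      apply hf
      have hfe : f = fun y => k⁻¹ * (k * f y) := by
        funext y; field_simp
      rw [hfe]
      exact h.const_mul _

lemma pdv_const_mul (j : Fin m) (k : ℝ) (f : Pt m → ℝ) :
    pdv j (fun y => k * f y) = fun y => k * pdv j f y := by
  funext x
  simp only [pdv, myfderiv_const_mul, ContinuousLinearMap.smul_apply, smul_eq_mul]

lemma iter_pdv_const_mul (j : Fin m) (s : ℕ) (k : ℝ) (f : Pt m → ℝ) :
    (pdv j)^[s] (fun y => k * f y) = fun y => k * (pdv j)^[s] f y := by
  induction s generalizing f with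
  | zero => rfl
  | succ s ih =>
      rw [Function.iterate_succ_apply, Function.iterate_succ_apply, pdv_const_mul, ih]

lemma md_const_mul (α : Fin m → ℕ) (k : ℝ) (f : Pt m → ℝ) :
    md α (fun y => k * f y) = fun y => k * md α f y := by
  unfold md
  induction (List.finRange m) with
  | nil => rfl
  | cons j l ih =>
      rw [List.foldr_cons, List.foldr_cons, ih, iter_pdv_const_mul]

lemma iter_pdv_zeroFn (j : Fin m) (s : ℕ) :
    (pdv j)^[s] (fun _ : Pt m => (0:ℝ)) = fun _ => (0:ℝ) := by
  induction s with
  | zero => rfl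
  | succ s ih => rw [Function.iterate_succ_apply, pdv_constFn, ih]

lemma iter_pdv_constFn (j : Fin m) (s : ℕ) (c : ℝ) :
    (pdv j)^[s] (fun _ : Pt m => c) = (fun _ => c) ∨
      (pdv j)^[s] (fun _ : Pt m => c) = fun _ => (0:ℝ) := by
  cases s with
  | zero => exact Or.inl rfl
  | succ s =>
      right
      rw [Function.iterate_succ_apply, pdv_constFn, iter_pdv_zeroFn]

lemma md_constFn_bound (α : Fin m → ℕ) (c : ℝ) (y : Pt m) :
    |md α (fun _ : Pt m => c) y| ≤ |c| := by
  unfold md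
  have : ∀ l : List (Fin m), (l.foldr (fun j g => (pdv j)^[α j] g) (fun _ : Pt m => c))
      = (fun _ => c) ∨ (l.foldr (fun j g => (pdv j)^[α j] g) (fun _ : Pt m => c))
      = fun _ => (0:ℝ) := by
    intro l
    induction l with
    | nil => exact Or.inl rfl
    | cons j l ih =>
        rw [List.foldr_cons]
        rcases ih with h | h <;> rw [h]
        · exact iter_pdv_constFn j (α j) c
        · exact Or.inr (iter_pdv_zeroFn j (α j))
  rcases this (List.finRange m) with h | h <;> rw [h] <;> simp

lemma pdv_contDiffOn {f : Pt m → ℝ} {Ω : Set (Pt m)} (hΩ : IsOpen Ω)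
    (hf : ContDiffOn ℝ (⊤ : ℕ∞) f Ω) (j : Fin m) :
    ContDiffOn ℝ (⊤ : ℕ∞) (pdv j f) Ω :=
  (hf.fderiv_of_isOpen hΩ (le_of_eq (by rfl))).clm_apply contDiffOn_const

lemma iter_pdv_contDiffOn {f : Pt m → ℝ} {Ω : Set (Pt m)} (hΩ : IsOpen Ω)
    (hf : ContDiffOn ℝ (⊤ : ℕ∞) f Ω) (j : Fin m) (s : ℕ) :
    ContDiffOn ℝ (⊤ : ℕ∞) ((pdv j)^[s] f) Ω := by
  induction s generalizing f with
  | zero => exact hf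
  | succ s ih =>
      rw [Function.iterate_succ_apply]
      exact ih (pdv_contDiffOn hΩ hf j)

lemma md_contDiffOn {f : Pt m → ℝ} {Ω : Set (Pt m)} (hΩ : IsOpen Ω)
    (hf : ContDiffOn ℝ (⊤ : ℕ∞) f Ω) (α : Fin m → ℕ) :
    ContDiffOn ℝ (⊤ : ℕ∞) (md α f) Ω := by
  unfold md
  induction (List.finRange m) with
  | nil => exact hf
  | cons j l ih =>
      rw [List.foldr_cons]
      exact iter_pdv_contDiffOn hΩ ih j (α j)

lemma vbracket_contDiffOn {n : ℕ} {V W : VF n} {Ω : Set (Pt n)} (hΩ : IsOpen Ω)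
    (hV : ContDiffOn ℝ (⊤ : ℕ∞) V Ω) (hW : ContDiffOn ℝ (⊤ : ℕ∞) W Ω) :
    ContDiffOn ℝ (⊤ : ℕ∞) (vbracket V W) Ω :=
  ((hW.fderiv_of_isOpen hΩ (le_of_eq (by rfl))).clm_apply hV).sub
    ((hV.fderiv_of_isOpen hΩ (le_of_eq (by rfl))).clm_apply hW)

end Helpers
section Helpers2

variable {νt : ℕ}

lemma tail_mem_unitCube {δ : Fin (νt+1) → ℝ} (hδ : δ ∈ unitCube (νt+1)) :
    Fin.tail δ ∈ unitCube νt := fun μ => hδ μ.succ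

lemma dpow_cons_zero (δ : Fin (νt+1) → ℝ) (d : Fin νt → ℝ) :
    dpow δ (Fin.cons 0 d) = dpow (Fin.tail δ) d := by
  unfold dpow
  rw [Fin.prod_univ_succ]
  simp [Fin.tail, Real.rpow_zero]

lemma dpow_cons_one (δ : Fin (νt+1) → ℝ) :
    dpow δ (Fin.cons 1 (fun _ => (0:ℝ))) = δ 0 := by
  unfold dpow
  rw [Fin.prod_univ_succ]
  simp [Real.rpow_one, Real.rpow_zero]

lemma cons_add_cons (a b : Fin νt → ℝ) :
    (Fin.cons (0:ℝ) a : Fin (νt+1) → ℝ) + (Fin.cons (0:ℝ) b : Fin (νt+1) → ℝ)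
      = (Fin.cons 0 (a + b) : Fin (νt+1) → ℝ) := by
  funext μ
  refine Fin.cases ?_ (fun κ => ?_) μ <;> simp

lemma dpow_nonneg {ν : ℕ} {δ e : Fin ν → ℝ} (hδ : δ ∈ unitCube ν) :
    0 ≤ dpow δ e :=
  Finset.prod_nonneg fun μ _ => Real.rpow_nonneg (hδ μ).1 _

lemma dpow_le_one {ν : ℕ} {δ e : Fin ν → ℝ} (hδ : δ ∈ unitCube ν)
    (he : ∀ μ, 0 ≤ e μ) : dpow δ e ≤ 1 :=
  Finset.prod_le_one (fun μ _ => Real.rpow_nonneg (hδ μ).1 _)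
    (fun μ _ => Real.rpow_le_one (hδ μ).1 (hδ μ).2 (he μ))

lemma dpow_split {δ : Fin (νt+1) → ℝ} (hδ : δ ∈ unitCube (νt+1))
    {d : Fin (νt+1) → ℝ} (hd : 1 ≤ d 0) :
    dpow δ d = dpow δ (d - Fin.cons 1 (fun _ => (0:ℝ))) * δ 0 := by
  unfold dpow
  rw [Fin.prod_univ_succ, Fin.prod_univ_succ]
  have h0 : δ 0 ^ d 0 = δ 0 ^ (d 0 - 1) * δ 0 := by
    nth_rewrite 1 [show d 0 = (d 0 - 1) + 1 by ring]
    rw [Real.rpow_add' (hδ 0).1 (by intro h; rw [show d 0 - 1 + 1 = d 0 by ring] at h; rw [h] at hd; norm_num at hd), Real.rpow_one]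
  simp only [Pi.sub_apply, Fin.cons_zero, Fin.cons_succ, sub_zero]
  rw [h0]; ring

end Helpers2
section Helpers3

variable {n νt : ℕ}

/-- The augmented set. -/
def augSet (St : Set (VF n × (Fin νt → ℝ))) : Set (VF n × (Fin (νt + 1) → ℝ)) :=
  {p | ∃ i : Fin n, p = ((fun _ => Pi.single i 1), Fin.cons 1 (fun _ => 0))} ∪
  {p | ∃ q ∈ St, p = (q.1, Fin.cons 0 q.2)}

lemma genLie_lift {St : Set (VF n × (Fin νt → ℝ))} {p : VF n × (Fin νt → ℝ)}
    (h : genLie St p) : genLie (augSet St) (p.1, Fin.cons 0 p.2) := by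
  induction h with
  | base p hp => exact genLie.base _ (Or.inr ⟨p, hp, rfl⟩)
  | br p q hp hq ihp ihq =>
      have := genLie.br _ _ ihp ihq
      simpa [cons_add_cons] using this

lemma genLie_smooth {Ω : Set (Pt n)} (hΩ : IsOpen Ω)
    {St : Set (VF n × (Fin νt → ℝ))}
    (hreg : ∀ p ∈ St, ContDiffOn ℝ (⊤ : ℕ∞) p.1 Ω ∧ (∀ μ, 0 ≤ p.2 μ) ∧ InD p.2)
    {p : VF n × (Fin (νt+1) → ℝ)} (h : genLie (augSet St) p) :
    ContDiffOn ℝ (⊤ : ℕ∞) p.1 Ω := by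
  induction h with
  | base p hp =>
      rcases hp with ⟨i, rfl⟩ | ⟨q, hq, rfl⟩
      · exact contDiffOn_const
      · exact (hreg q hq).1
  | br p q hp hq ihp ihq => exact vbracket_contDiffOn hΩ ihp ihq

lemma genLie_deg {Ω : Set (Pt n)}
    {St : Set (VF n × (Fin νt → ℝ))}
    (hreg : ∀ p ∈ St, ContDiffOn ℝ (⊤ : ℕ∞) p.1 Ω ∧ (∀ μ, 0 ≤ p.2 μ) ∧ InD p.2)
    {p : VF n × (Fin (νt+1) → ℝ)} (h : genLie (augSet St) p) :
    (∀ μ, 0 ≤ p.2 μ) ∧ (p.2 0 = 0 ∨ 1 ≤ p.2 0) := by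
  induction h with
  | base p hp =>
      rcases hp with ⟨i, rfl⟩ | ⟨q, hq, rfl⟩
      · refine ⟨fun μ => ?_, Or.inr (by simp)⟩
        refine Fin.cases ?_ (fun κ => ?_) μ <;> simp
      · refine ⟨fun μ => ?_, Or.inl (by simp)⟩
        refine Fin.cases ?_ (fun κ => ?_) μ <;> simp [(hreg q hq).2.1 _]
  | br p q hp hq ihp ihq =>
      refine ⟨fun μ => add_nonneg (ihp.1 μ) (ihq.1 μ), ?_⟩
      rcases ihp.2 with h1 | h1 <;> rcases ihq.2 with h2 | h2
      · exact Or.inl (by simp [Prod.snd, h1, h2])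
      · exact Or.inr (by have := ihp.1 0; simp only [Pi.add_apply]; linarith)
      · exact Or.inr (by have := ihq.1 0; simp only [Pi.add_apply]; linarith)
      · exact Or.inr (by have := ihq.1 0; simp only [Pi.add_apply]; linarith)

lemma genLie_zero_lift {Ω : Set (Pt n)}
    {St : Set (VF n × (Fin νt → ℝ))}
    (hreg : ∀ p ∈ St, ContDiffOn ℝ (⊤ : ℕ∞) p.1 Ω ∧ (∀ μ, 0 ≤ p.2 μ) ∧ InD p.2)
    {p : VF n × (Fin (νt+1) → ℝ)} (h : genLie (augSet St) p) (h0 : p.2 0 = 0) :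
    ∃ pt : VF n × (Fin νt → ℝ), genLie St pt ∧ p = (pt.1, Fin.cons 0 pt.2) := by
  induction h with
  | base p hp =>
      rcases hp with ⟨i, rfl⟩ | ⟨q, hq, rfl⟩
      · simp at h0
      · exact ⟨q, genLie.base _ hq, rfl⟩
  | br p q hp hq ihp ihq =>
      have hdp := (genLie_deg hreg hp).1 0
      have hdq := (genLie_deg hreg hq).1 0
      have h0' : p.2 0 = 0 ∧ q.2 0 = 0 := by
        constructor <;> (simp only [Pi.add_apply] at h0; linarith)
      obtain ⟨pt, hpt, hpe⟩ := ihp h0'.1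
      obtain ⟨qt, hqt, hqe⟩ := ihq h0'.2
      refine ⟨(vbracket pt.1 qt.1, pt.2 + qt.2), genLie.br _ _ hpt hqt, ?_⟩
      rw [Prod.ext_iff] at hpe hqe ⊢
      exact ⟨by simp [hpe.1, hqe.1], by simp [hpe.2, hqe.2, cons_add_cons]⟩

end Helpers3
section Helpers4

variable {n νt : ℕ}

lemma lift_smoothControlsH {q : ℕ} {X : Fin q → VF n} {d : Fin q → Fin νt → ℝ}
    {X₀ : VF n} {h : (Fin νt → ℝ) → ℝ} {Ω' Ω : Set (Pt n)}
    (hc : SmoothControlsH X d X₀ h Ω' Ω) :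
    SmoothControlsH X (fun j => Fin.cons 0 (d j)) X₀ (fun δ => h (Fin.tail δ)) Ω' Ω := by
  obtain ⟨Ω'', h1, h2, h3, c, hsm, heq, hbd⟩ := hc
  refine ⟨Ω'', h1, h2, h3, fun δ => c (Fin.tail δ), ?_, ?_, ?_⟩
  · exact fun δ hδ j => hsm _ (tail_mem_unitCube hδ) j
  · intro δ hδ y hy
    have := heq _ (tail_mem_unitCube hδ) y hy
    simpa only [dpow_cons_zero] using this
  · intro α
    obtain ⟨C, hC⟩ := hbd α
    exact ⟨C, fun δ hδ j y hy => hC _ (tail_mem_unitCube hδ) j y hy⟩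

lemma lift_smoothControlsPair {q : ℕ} {X : Fin q → VF n} {d : Fin q → Fin νt → ℝ}
    {pt : VF n × (Fin νt → ℝ)} {Ω' Ω : Set (Pt n)}
    (hc : SmoothControlsPair X d pt Ω' Ω) :
    SmoothControlsPair X (fun j => Fin.cons 0 (d j)) (pt.1, Fin.cons 0 pt.2) Ω' Ω := by
  unfold SmoothControlsPair at hc ⊢
  have : (fun δ : Fin (νt+1) → ℝ => dpow δ (pt.1, Fin.cons 0 pt.2).2)
      = fun δ => dpow (Fin.tail δ) pt.2 := funext fun δ => dpow_cons_zero δ pt.2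
  rw [this]
  exact lift_smoothControlsH hc

lemma self_smoothControlsPair {ν : ℕ} {Ω' Ω Ω'' : Set (Pt n)} (hΩ'' : IsOpen Ω'')
    (h2 : closure Ω' ⊆ Ω'') (h3 : closure Ω'' ⊆ Ω)
    (X₀ : VF n) (d : Fin ν → ℝ) :
    SmoothControlsPair ![X₀] ![d] (X₀, d) Ω' Ω := by
  refine ⟨Ω'', hΩ'', h2, h3, fun _ _ _ => (1:ℝ), fun _ _ _ => contDiffOn_const, ?_, ?_⟩
  · intro δ hδ y hy
    simp [Fin.sum_univ_one]
  · intro α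
    refine ⟨1, fun δ hδ j y hy => ?_⟩
    simpa using md_constFn_bound α 1 y

end Helpers4
section Helpers5

variable {n νt : ℕ}

lemma pt_eq_sum_single (v : Pt n) : v = ∑ j, v j • (Pi.single j (1:ℝ) : Pt n) := by
  funext k
  rw [Finset.sum_apply]
  simp [Pi.single_apply, Finset.sum_ite_eq', mul_comm]

lemma coord_smoothControlsH {Ω Ω' Ω'' : Set (Pt n)} (hΩ : IsOpen Ω)
    (hΩ'' : IsOpen Ω'') (h2 : closure Ω' ⊆ Ω'') (h3 : closure Ω'' ⊆ Ω)
    (h4 : IsCompact (closure Ω''))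
    {X₀ : VF n} (hX₀ : ContDiffOn ℝ (⊤ : ℕ∞) X₀ Ω)
    {d : Fin (νt+1) → ℝ} (hd0 : 1 ≤ d 0) (hdn : ∀ μ, 0 ≤ d μ) :
    SmoothControlsH (fun (j : Fin n) => fun _ => Pi.single j 1)
      (fun _ => Fin.cons 1 (fun _ => 0)) X₀ (fun δ => dpow δ d) Ω' Ω := by
  have hΩ''Ω : Ω'' ⊆ Ω := subset_closure.trans h3
  set e : Fin (νt+1) → ℝ := Fin.cons 1 (fun _ => 0) with he
  have hde : ∀ μ, 0 ≤ (d - e) μ := by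
    intro μ
    refine Fin.cases ?_ (fun κ => ?_) μ <;>
      simp only [he, Pi.sub_apply, Fin.cons_zero, Fin.cons_succ, sub_zero]
    · linarith
    · exact hdn _
  have hcomp : ∀ j : Fin n, ContDiffOn ℝ (⊤ : ℕ∞) (fun y => X₀ y j) Ω := by
    intro j
    exact (ContinuousLinearMap.proj j (R := ℝ) (φ := fun _ : Fin n => ℝ)).contDiff.comp_contDiffOn
      hX₀
  refine ⟨Ω'', hΩ'', h2, h3,
    fun δ j y => dpow δ (d - e) * X₀ y j, ?_, ?_, ?_⟩
  · intro δ hδ j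
    exact contDiffOn_const.mul ((hcomp j).mono hΩ''Ω)
  · intro δ hδ y hy
    show dpow δ d • X₀ y = ∑ j, (dpow δ (d - e) * X₀ y j) • dpow δ e • (Pi.single j (1:ℝ) : Pt n)
    rw [dpow_split hδ hd0]
    nth_rewrite 1 [pt_eq_sum_single (X₀ y)]
    rw [Finset.smul_sum]
    refine Finset.sum_congr rfl (fun j _ => ?_)
    rw [show dpow δ e = δ 0 from dpow_cons_one δ, ← he]
    simp only [smul_smul]
    congr 1
    ring
  · intro α
    have hcont : ∀ j : Fin n, ContinuousOn (md α (fun y => X₀ y j)) (closure Ω'') :=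
      fun j => ((md_contDiffOn hΩ (hcomp j) α).continuousOn).mono h3
    choose C hC using fun j => h4.exists_bound_of_continuousOn (hcont j)
    refine ⟨∑ j, |C j|, ?_⟩
    intro δ hδ j y hy
    have hmd : md α (fun y => dpow δ (d - e) * X₀ y j) y
        = dpow δ (d - e) * md α (fun y => X₀ y j) y := by
      rw [md_const_mul]
    rw [hmd, abs_mul]
    have h1' : |dpow δ (d - e)| ≤ 1 := by
      rw [abs_of_nonneg (dpow_nonneg hδ)]
      exact dpow_le_one hδ hde
    have h2' : |md α (fun y => X₀ y j) y| ≤ C j := by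
      have := hC j y (subset_closure hy)
      simpa [Real.norm_eq_abs] using this
    calc |dpow δ (d - e)| * |md α (fun y => X₀ y j) y| ≤ 1 * C j := by
          apply mul_le_mul h1' h2' (abs_nonneg _) zero_le_one
      _ = C j := one_mul _
      _ ≤ |C j| := le_abs_self _
      _ ≤ ∑ i, |C i| := Finset.single_le_sum (fun i _ => abs_nonneg (C i)) (Finset.mem_univ j)

end Helpers5
section Assembly

variable {n νt : ℕ}

/-- The augmented finite generating set. -/
def augF (Ft : Set (VF n × (Fin νt → ℝ))) : Set (VF n × (Fin (νt + 1) → ℝ)) :=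
  {p | ∃ i : Fin n, p = ((fun _ => Pi.single i 1), Fin.cons 1 (fun _ => 0))} ∪
  ((fun p : VF n × (Fin νt → ℝ) => (p.1, Fin.cons 0 p.2)) '' Ft)

lemma aux_finGenBy {Ω Ω' : Set (Pt n)} (hΩ : IsOpen Ω)
    (hcl : closure Ω' ⊆ Ω) (hcpt : IsCompact (closure Ω'))
    {St : Set (VF n × (Fin νt → ℝ))}
    (hreg : ∀ p ∈ St, ContDiffOn ℝ (⊤ : ℕ∞) p.1 Ω ∧ (∀ μ, 0 ≤ p.2 μ) ∧ InD p.2)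
    {Ft : Set (VF n × (Fin νt → ℝ))}
    (hFt : SetSmoothFinGenBy (LSet St) Ft Ω' Ω) :
    SetSmoothFinGenBy (LSet (augSet St)) (augF Ft) Ω' Ω := by
  obtain ⟨K, hK, hK1, hK2⟩ := exists_compact_between hcpt hΩ hcl
  have hΩ''o : IsOpen (interior K) := isOpen_interior
  have hΩ''1 : closure Ω' ⊆ interior K := hK1
  have hclK : closure (interior K) ⊆ K := closure_minimal interior_subset hK.isClosed
  have hΩ''2 : closure (interior K) ⊆ Ω := hclK.trans hK2
  have hΩ''c : IsCompact (closure (interior K)) := hK.of_isClosed_subset isClosed_closure hclK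
  refine ⟨?_, ?_, ?_⟩
  · refine Set.Finite.union ?_ (hFt.1.image _)
    exact Set.Finite.subset
      (Set.finite_range (fun i : Fin n =>
        ((fun _ => Pi.single i 1 : VF n), (Fin.cons 1 (fun _ => 0) : Fin (νt+1) → ℝ))))
      (fun p hp => by obtain ⟨i, hi⟩ := hp; exact ⟨i, hi.symm⟩)
  · -- augF Ft smoothly controls LSet (augSet St)
    intro p hp
    have hp' : genLie (augSet St) p := hp
    have hdeg := genLie_deg hreg hp'
    rcases hdeg.2 with h0 | h1
    · obtain ⟨pt, hpt, heq⟩ := genLie_zero_lift hreg hp' h0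
      obtain ⟨q, X, dt, hmem, hctrl⟩ := hFt.2.1 pt hpt
      rw [heq]
      exact ⟨q, X, fun j => Fin.cons 0 (dt j),
        fun j => Or.inr ⟨(X j, dt j), hmem j, rfl⟩, lift_smoothControlsPair hctrl⟩
    · refine ⟨n, fun j => fun _ => Pi.single j 1, fun _ => Fin.cons 1 (fun _ => 0),
        fun j => Or.inl ⟨j, rfl⟩, ?_⟩
      exact coord_smoothControlsH hΩ hΩ''o hΩ''1 hΩ''2 hΩ''c
        (genLie_smooth hΩ hreg hp') h1 hdeg.1
  · -- LSet (augSet St) smoothly controls augF Ft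
    intro p hp
    rcases hp with ⟨i, rfl⟩ | ⟨pt, hpt, rfl⟩
    · refine ⟨1, ![fun _ => Pi.single i 1], ![Fin.cons 1 (fun _ => 0)], ?_, ?_⟩
      · intro j
        have hj : j = 0 := Subsingleton.elim _ _
        subst hj
        exact genLie.base _ (Or.inl ⟨i, rfl⟩)
      · exact self_smoothControlsPair hΩ''o hΩ''1 hΩ''2 _ _
    · obtain ⟨q, X, dt, hmem, hctrl⟩ := hFt.2.2 pt hpt
      exact ⟨q, X, fun j => Fin.cons 0 (dt j),
        fun j => genLie_lift (hmem j), lift_smoothControlsPair hctrl⟩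

lemma augF_inD {Ft : Set (VF n × (Fin νt → ℝ))} (hInD : ∀ p ∈ Ft, InD p.2) :
    ∀ p ∈ augF (n := n) Ft, InD p.2 := by
  intro p hp
  rcases hp with ⟨i, rfl⟩ | ⟨pt, hptF, rfl⟩
  · refine ⟨0, by simp, fun μ' hμ' => ?_⟩
    obtain ⟨κ, rfl⟩ := Fin.eq_succ_of_ne_zero hμ'
    simp
  · obtain ⟨μ, hne, hz⟩ := hInD pt hptF
    refine ⟨μ.succ, by simpa using hne, fun μ' hμ' => ?_⟩
    rcases Fin.eq_zero_or_eq_succ μ' with rfl | ⟨κ, rfl⟩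
    · simp
    · have hκ : κ ≠ μ := fun h => hμ' (by rw [h])
      simpa using hz κ hκ

end Assembly

/-- If `S̃ ⊂ Γ(TΩ) × 𝔡_ν̃` has `L(S̃)` smoothly finitely generated
(resp. smoothly linearly finitely generated) on `Ω'`, then the augmented set
`S = {(∂/∂x_i, (1,0_ν̃))} ∪ {(X̃,(0,d̃)) : (X̃,d̃) ∈ S̃}` (with `ν = 1 + ν̃` parameters,
the extra parameter first) has `L(S)` smoothly finitely generated (resp. smoothly
linearly finitely generated) on `Ω'`. -/
theorem stmt15 {n νt : ℕ} (Ω Ω' : Set (Pt n)) (hΩ : IsOpen Ω) (hΩ' : IsOpen Ω')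
    (hcl : closure Ω' ⊆ Ω) (hcpt : IsCompact (closure Ω'))
    (St : Set (VF n × (Fin νt → ℝ)))
    (hreg : ∀ p ∈ St, ContDiffOn ℝ (⊤ : ℕ∞) p.1 Ω ∧ (∀ μ, 0 ≤ p.2 μ) ∧ InD p.2) :
    letI S : Set (VF n × (Fin (νt + 1) → ℝ)) :=
      {p | ∃ i : Fin n, p = ((fun _ => Pi.single i 1), Fin.cons 1 (fun _ => 0))} ∪
      {p | ∃ q ∈ St, p = (q.1, Fin.cons 0 q.2)}
    (SetSmoothFinGen (LSet St) Ω' Ω → SetSmoothFinGen (LSet S) Ω' Ω) ∧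
    (SetSmoothLinFinGen (LSet St) Ω' Ω → SetSmoothLinFinGen (LSet S) Ω' Ω) := by
  constructor
  · rintro ⟨Ft, hFt⟩
    exact ⟨augF Ft, aux_finGenBy hΩ hcl hcpt hreg hFt⟩
  · rintro ⟨Ft, hInD, hFt⟩
    exact ⟨augF Ft, augF_inD hInD, aux_finGenBy hΩ hcl hcpt hreg hFt⟩

end
end
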